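/- For λ > 0 and a partition Δ with λ·d(Δ) < π, the 'hat' trigonometric B-splines N_i ∈ 𝕊(D²+λ², Δ) with N_i(t_j) = δ_{ij} and N_i supported on [t_{i−1}, t_{i+1}] exist, are unique, and are nonnegative on [a,b]. -/
import Mathlib

lemma trig_coeff_zero {l u v A B : ℝ} (h : Real.sin (l * (v - u)) ≠ 0)
    (h1 : A * Real.sin (l * u) + B * Real.cos (l * u) = 0)
    (h2 : A * Real.sin (l * v) + B * Real.cos (l * v) = 0) : A = 0 ∧ B = 0 := by
  have hs : Real.sin (l * (v - u)) =
      Real.sin (l * v) * Real.cos (l * u) - Real.cos (l * v) * Real.sin (l * u) := by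
    rw [show l * (v - u) = l * v - l * u by ring, Real.sin_sub]
  constructor
  · have hA : A * Real.sin (l * (v - u)) = 0 := by
      rw [hs]; linear_combination Real.cos (l * u) * h2 - Real.cos (l * v) * h1
    exact (mul_eq_zero.mp hA).resolve_right h
  · have hB : B * Real.sin (l * (v - u)) = 0 := by
      rw [hs]; linear_combination Real.sin (l * v) * h1 - Real.sin (l * u) * h2
    exact (mul_eq_zero.mp hB).resolve_right h

lemma continuousOn_union_closed {f : ℝ → ℝ} {s t : Set ℝ} (hs : IsClosed s) (ht : IsClosed t)
    (h1 : ContinuousOn f s) (h2 : ContinuousOn f t) : ContinuousOn f (s ∪ t) := by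
  intro x hx
  have hws : ContinuousWithinAt f s x := by
    by_cases hxs : x ∈ s
    · exact h1 x hxs
    · exact continuousWithinAt_of_notMem_closure (by rwa [hs.closure_eq])
  have hwt : ContinuousWithinAt f t x := by
    by_cases hxt : x ∈ t
    · exact h2 x hxt
    · exact continuousWithinAt_of_notMem_closure (by rwa [ht.closure_eq])
  exact hws.union hwt

lemma exists_subinterval (t : ℕ → ℝ) (x : ℝ) :
    ∀ n, 1 ≤ n → x ∈ Set.Icc (t 0) (t n) → ∃ j < n, x ∈ Set.Icc (t j) (t (j + 1)) := by
  intro n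
  induction n with
  | zero => omega
  | succ m ih =>
    intro _ hx
    by_cases hm : m = 0
    · exact ⟨0, by omega, by subst hm; exact hx⟩
    · by_cases hxm : x ≤ t m
      · obtain ⟨j, hj, hxj⟩ := ih (by omega) ⟨hx.1, hxm⟩
        exact ⟨j, by omega, hxj⟩
      · exact ⟨m, by omega, ⟨le_of_not_ge hxm, hx.2⟩⟩

noncomputable def hatN (l : ℝ) (t : ℕ → ℝ) (i k : ℕ) : ℝ → ℝ := fun x =>
  if x = t i then 1
  else if t (i - 1) < x ∧ x < t i then
    Real.sin (l * (x - t (i - 1))) / Real.sin (l * (t i - t (i - 1)))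
  else if t i < x ∧ x ≤ t k then
    Real.sin (l * (t k - x)) / Real.sin (l * (t k - t i))
  else 0


/-- `s` is a trigonometric `L`-spline for `L = D² + λ²` on the partition
`t 0 < t 1 < ⋯ < t n`: continuous on `[t 0, t n]` and on each subinterval a linear
combination of `sin (λ x)` and `cos (λ x)`. -/
def IsTrigSpline (l : ℝ) (n : ℕ) (t : ℕ → ℝ) (s : ℝ → ℝ) : Prop :=
  ContinuousOn s (Set.Icc (t 0) (t n)) ∧
  ∀ i < n, ∃ A B : ℝ, ∀ x ∈ Set.Icc (t i) (t (i + 1)),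
    s x = A * Real.sin (l * x) + B * Real.cos (l * x)

/-- `N` is the `i`-th "hat" trigonometric B-spline: the spline with `N (t j) = δ_{i j}`
supported (within `[a, b] = [t 0, t n]`) on `[t (i−1), t (i+1)] ∩ [a, b]`. -/
def IsTrigHat (l : ℝ) (n : ℕ) (t : ℕ → ℝ) (i : ℕ) (N : ℝ → ℝ) : Prop :=
  IsTrigSpline l n t N ∧
  (∀ j ≤ n, N (t j) = if i = j then 1 else 0) ∧
  (∀ x ∈ Set.Icc (t 0) (t n), x ∉ Set.Icc (t (i - 1)) (t (min (i + 1) n)) → N x = 0)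

/-- If `λ · d(Δ) < π`, the hat trigonometric B-splines exist, are unique (as functions
on `[a, b]`), and are nonnegative on `[a, b]`. -/
theorem trigHat_exists_unique_nonneg (a b l : ℝ) (hab : a < b) (hl : 0 < l)
    (n : ℕ) (hn : 1 ≤ n) (t : ℕ → ℝ) (hmono : ∀ i < n, t i < t (i + 1))
    (h0 : t 0 = a) (hb : t n = b)
    (hd : ∀ i < n, l * (t (i + 1) - t i) < Real.pi) :
    ∀ i ≤ n, ∃ N : ℝ → ℝ, IsTrigHat l n t i N ∧
      (∀ x ∈ Set.Icc a b, 0 ≤ N x) ∧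
      (∀ N' : ℝ → ℝ, IsTrigHat l n t i N' → ∀ x ∈ Set.Icc a b, N' x = N x) := by
  intro i hi
  have tmono : ∀ p q : ℕ, p ≤ q → q ≤ n → t p ≤ t q := by
    intro p q hpq hqn
    induction q with
    | zero => exact le_of_eq (by rw [Nat.le_zero.mp hpq])
    | succ m ih =>
      by_cases hp : p = m + 1
      · exact le_of_eq (by rw [hp])
      · exact le_trans (ih (by omega) (by omega)) (hmono m (by omega)).le
  have tstrict : ∀ p q : ℕ, p < q → q ≤ n → t p < t q := by
    intro p q hpq hqn
    calc t p ≤ t (q - 1) := tmono p (q - 1) (by omega) (by omega)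
      _ < t q := by
        have h := hmono (q - 1) (by omega)
        rwa [show q - 1 + 1 = q by omega] at h
  set k := min (i + 1) n with hkdef
  have hik : i ≤ k := by omega
  have hkle : k ≤ n := by omega
  set N := hatN l t i k with hNdef
  -- nodal values
  have hnodal : ∀ j ≤ n, N (t j) = if i = j then 1 else 0 := by
    intro j hj
    by_cases hij : i = j
    · subst hij
      simp [hNdef, hatN]
    · rw [if_neg hij]
      have hne : t j ≠ t i := by
        rcases lt_or_gt_of_ne (fun h : j = i => hij h.symm) with h | h
        · exact (tstrict j i h hi).ne
        · exact (tstrict i j h hj).ne'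
      simp only [hNdef, hatN]
      rw [if_neg hne]
      have h2 : ¬(t (i - 1) < t j ∧ t j < t i) := by
        rintro ⟨ha, hb'⟩
        have hji : j < i := by
          by_contra h; push_neg at h
          exact absurd hb' (not_lt.mpr (tmono i j h hj))
        have hji' : i - 1 < j := by
          by_contra h; push_neg at h
          exact absurd ha (not_lt.mpr (tmono j (i - 1) h (by omega)))
        omega
      rw [if_neg h2]
      by_cases h3 : t i < t j ∧ t j ≤ t k
      · rw [if_pos h3]
        have hij' : i < j := by
          by_contra h; push_neg at h
          exact absurd h3.1 (not_lt.mpr (tmono j i h hi))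
        have hjk : j ≤ k := by
          by_contra h; push_neg at h
          exact absurd h3.2 (not_le.mpr (tstrict k j h hj))
        have hjk' : t j = t k := by rw [show j = k by omega]
        rw [hjk', sub_self, mul_zero, Real.sin_zero, zero_div]
      · rw [if_neg h3]
  -- support
  have hsupp : ∀ x ∈ Set.Icc (t 0) (t n), x ∉ Set.Icc (t (i - 1)) (t k) → N x = 0 := by
    intro x _ hx2
    rw [Set.mem_Icc, not_and_or, not_le, not_le] at hx2
    simp only [hNdef, hatN]
    rcases hx2 with h | h
    · have hxi : x < t i := lt_of_lt_of_le h (tmono (i - 1) i (by omega) hi)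
      rw [if_neg hxi.ne, if_neg (by rintro ⟨h2, _⟩; linarith),
        if_neg (by rintro ⟨h2, _⟩; linarith)]
    · have hxi : t i < x := lt_of_le_of_lt (tmono i k hik hkle) h
      rw [if_neg hxi.ne', if_neg (by rintro ⟨_, h2⟩; linarith),
        if_neg (by rintro ⟨_, h2⟩; linarith)]
  -- representation on each subinterval
  have hrep : ∀ j < n, ∃ A B : ℝ, ∀ x ∈ Set.Icc (t j) (t (j + 1)),
      N x = A * Real.sin (l * x) + B * Real.cos (l * x) := by
    intro j hj
    rcases lt_trichotomy (j + 1) i with hji | hji | hji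
    · -- interval entirely left of support
      refine ⟨0, 0, fun x hx => ?_⟩
      have h1 : x ≤ t (i - 1) := le_trans hx.2 (tmono (j + 1) (i - 1) (by omega) (by omega))
      have h2 : t (i - 1) < t i := tstrict (i - 1) i (by omega) hi
      simp only [hNdef, hatN]
      rw [if_neg (by linarith), if_neg (by rintro ⟨h3, _⟩; linarith),
        if_neg (by rintro ⟨h3, _⟩; linarith)]
      ring
    · -- ascending interval : j = i - 1
      have hi1 : i - 1 = j := by omega
      have hjn : t j < t i := by
        have := hmono j hj; rwa [hji] at this
      have hgap : l * (t i - t j) < Real.pi := by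
        have := hd j hj; rwa [hji] at this
      have hD : 0 < Real.sin (l * (t i - t j)) :=
        Real.sin_pos_of_pos_of_lt_pi (mul_pos hl (by linarith)) hgap
      refine ⟨Real.cos (l * t j) / Real.sin (l * (t i - t j)),
        -Real.sin (l * t j) / Real.sin (l * (t i - t j)), fun x hx => ?_⟩
      rw [hji] at hx
      have key : N x = Real.sin (l * (x - t j)) / Real.sin (l * (t i - t j)) := by
        simp only [hNdef, hatN, hi1]
        by_cases hxe : x = t i
        · rw [if_pos hxe, hxe, div_self hD.ne']
        · have hxlt : x < t i := lt_of_le_of_ne hx.2 hxe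
          rw [if_neg hxe]
          by_cases hxj : t j < x
          · rw [if_pos ⟨hxj, hxlt⟩]
          · have hxeq : x = t j := le_antisymm (not_lt.mp hxj) hx.1
            rw [if_neg (by rintro ⟨h2, _⟩; exact hxj h2),
              if_neg (by rintro ⟨h2, _⟩; linarith), hxeq, sub_self, mul_zero,
              Real.sin_zero, zero_div]
      rw [key, show l * (x - t j) = l * x - l * t j by ring, Real.sin_sub]
      ring
    · rcases eq_or_lt_of_le (show i ≤ j by omega) with hji2 | hji2
      · -- descending interval : j = i
        subst hji2
        have hk1 : k = i + 1 := by omega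
        have hjn : t i < t k := by rw [hk1]; exact hmono i hj
        have hgap : l * (t k - t i) < Real.pi := by rw [hk1]; exact hd i hj
        have hD : 0 < Real.sin (l * (t k - t i)) :=
          Real.sin_pos_of_pos_of_lt_pi (mul_pos hl (by linarith)) hgap
        refine ⟨-Real.cos (l * t k) / Real.sin (l * (t k - t i)),
          Real.sin (l * t k) / Real.sin (l * (t k - t i)), fun x hx => ?_⟩
        have key : N x = Real.sin (l * (t k - x)) / Real.sin (l * (t k - t i)) := by
          simp only [hNdef, hatN]
          by_cases hxe : x = t i
          · rw [if_pos hxe, hxe, div_self hD.ne']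
          · have hxgt : t i < x := lt_of_le_of_ne hx.1 (Ne.symm hxe)
            rw [if_neg hxe, if_neg (by rintro ⟨_, h2⟩; linarith),
              if_pos ⟨hxgt, by rw [hk1]; exact hx.2⟩]
        rw [key, show l * (t k - x) = l * t k - l * x by ring, Real.sin_sub]
        ring
      · -- interval entirely right of support
        refine ⟨0, 0, fun x hx => ?_⟩
        have hin : i < n := by omega
        have h1 : t k ≤ t j := tmono k j (by omega) (le_of_lt hj)
        have h2 : t i < t k := tstrict i k (by omega) hkle
        have h3 : t i < x := lt_of_lt_of_le (lt_of_lt_of_le h2 h1) hx.1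
        simp only [hNdef, hatN]
        rw [if_neg h3.ne', if_neg (by rintro ⟨_, h4⟩; linarith)]
        by_cases h5 : t i < x ∧ x ≤ t k
        · have hxk : x = t k := le_antisymm h5.2 (le_trans h1 hx.1)
          rw [if_pos h5, hxk, sub_self, mul_zero, Real.sin_zero, zero_div]
          ring
        · rw [if_neg h5]; ring
  -- continuity
  have hcont : ContinuousOn N (Set.Icc (t 0) (t n)) := by
    have main : ∀ m, m ≤ n → ContinuousOn N (Set.Icc (t 0) (t m)) := by
      intro m
      induction m with
      | zero => intro _; rw [Set.Icc_self]; exact continuousOn_singleton _ _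
      | succ m ih =>
        intro hm
        have h1 := ih (by omega)
        obtain ⟨A, B, hAB⟩ := hrep m (by omega)
        have h2 : ContinuousOn N (Set.Icc (t m) (t (m + 1))) := by
          exact ContinuousOn.congr (by fun_prop :
            ContinuousOn (fun x => A * Real.sin (l * x) + B * Real.cos (l * x))
              (Set.Icc (t m) (t (m + 1)))) (fun x hx => hAB x hx)
        have h3 := continuousOn_union_closed isClosed_Icc isClosed_Icc h1 h2
        rwa [Set.Icc_union_Icc_eq_Icc (tmono 0 m (by omega) (by omega))
          (tmono m (m + 1) (by omega) hm)] at h3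
    exact main n le_rfl
  -- nonnegativity
  have hpos : ∀ x : ℝ, 0 ≤ N x := by
    intro x
    simp only [hNdef, hatN]
    split_ifs with h1 h2 h3
    · exact zero_le_one
    · have hi1 : 1 ≤ i := by
        by_contra h
        have hz : i = 0 := by omega
        rw [hz] at h2
        simp only [Nat.zero_sub] at h2
        linarith [h2.1, h2.2]
      have hgap := hd (i - 1) (by omega)
      rw [show i - 1 + 1 = i by omega] at hgap
      have hlt : t (i - 1) < t i := tstrict (i - 1) i (by omega) hi
      apply div_nonneg
      · apply Real.sin_nonneg_of_nonneg_of_le_pi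
        · exact mul_nonneg hl.le (by linarith [h2.1])
        · nlinarith [h2.2]
      · exact (Real.sin_pos_of_pos_of_lt_pi (mul_pos hl (by linarith)) hgap).le
    · have hin : i < n := by
        by_contra h
        have hz : i = n := by omega
        have : k = n := by omega
        rw [this, hz] at h3
        linarith [h3.1, h3.2]
      have hk1 : k = i + 1 := by omega
      have hgap : l * (t k - t i) < Real.pi := by rw [hk1]; exact hd i hin
      have hlt : t i < t k := by rw [hk1]; exact hmono i hin
      apply div_nonneg
      · apply Real.sin_nonneg_of_nonneg_of_le_pi
        · exact mul_nonneg hl.le (by linarith [h3.2])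
        · nlinarith [h3.1]
      · exact (Real.sin_pos_of_pos_of_lt_pi (mul_pos hl (by linarith)) hgap).le
    · exact le_refl 0
  refine ⟨N, ⟨⟨hcont, hrep⟩, hnodal, hsupp⟩, fun x _ => hpos x, ?_⟩
  -- uniqueness
  intro N' hN' x hx
  rw [← h0, ← hb] at hx
  obtain ⟨j, hj, hxj⟩ := exists_subinterval t x n hn hx
  obtain ⟨A, B, hAB⟩ := hrep j hj
  obtain ⟨A', B', hAB'⟩ := hN'.1.2 j hj
  have hmem1 : t j ∈ Set.Icc (t j) (t (j + 1)) := ⟨le_rfl, (hmono j hj).le⟩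
  have hmem2 : t (j + 1) ∈ Set.Icc (t j) (t (j + 1)) := ⟨(hmono j hj).le, le_rfl⟩
  have e1 : A' * Real.sin (l * t j) + B' * Real.cos (l * t j)
      = A * Real.sin (l * t j) + B * Real.cos (l * t j) := by
    rw [← hAB' (t j) hmem1, ← hAB (t j) hmem1, hN'.2.1 j hj.le, hnodal j hj.le]
  have e2 : A' * Real.sin (l * t (j + 1)) + B' * Real.cos (l * t (j + 1))
      = A * Real.sin (l * t (j + 1)) + B * Real.cos (l * t (j + 1)) := by
    rw [← hAB' (t (j + 1)) hmem2, ← hAB (t (j + 1)) hmem2, hN'.2.1 (j + 1) hj,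
      hnodal (j + 1) hj]
  have hDne : Real.sin (l * (t (j + 1) - t j)) ≠ 0 :=
    (Real.sin_pos_of_pos_of_lt_pi (mul_pos hl (by linarith [hmono j hj])) (hd j hj)).ne'
  obtain ⟨hA, hB⟩ := trig_coeff_zero (A := A' - A) (B := B' - B) hDne
    (by linear_combination e1) (by linear_combination e2)
  rw [hAB' x hxj, hAB x hxj, show A' = A by linarith, show B' = B by linarith]
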